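/- Let H and K be subgroups of a finite abelian group G with H ∩ K = {0}, and let D ⊆ H and E ⊆ K be multisets. For y ∈ K: (a) if y ∈ ΣE, then (H + {y}) ∩ Σ(D ∪ E) = ΣD + {y}; (b) if y ∉ ΣE, then (H + {y}) ∩ Σ(D ∪ E) is empty. -/

import Mathlib

open scoped Pointwise

/-- The sumset ΣA of a multiset A: all sums of submultisets of A (including the empty sum 0). -/
def sumset {G : Type*} [AddCommMonoid G] (A : Multiset G) : Set G :=
  {x | ∃ B ≤ A, B.sum = x}

lemma multiset_split {G : Type*} [DecidableEq G] (B D E : Multiset G) (h : B ≤ D + E) :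
    ∃ B1 B2, B1 ≤ D ∧ B2 ≤ E ∧ B = B1 + B2 := by
  refine ⟨B ∩ D, B - D, Multiset.inter_le_right, ?_, ?_⟩
  · rw [Multiset.sub_le_iff_le_add]; rwa [add_comm]
  · ext a
    simp only [Multiset.count_add, Multiset.count_inter, Multiset.count_sub]
    omega

theorem stmt_6 {G : Type*} [AddCommGroup G] [Fintype G]
    (H K : AddSubgroup G) (hinf : H ⊓ K = ⊥)
    (D E : Multiset G) (hD : ∀ x ∈ D, x ∈ H) (hE : ∀ x ∈ E, x ∈ K)
    (y : G) (hy : y ∈ K) :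
    (y ∈ sumset E → ((H : Set G) + {y}) ∩ sumset (D + E) = sumset D + {y}) ∧
    (y ∉ sumset E → ((H : Set G) + {y}) ∩ sumset (D + E) = ∅) := by
  classical
  have key : ∀ x, x ∈ ((H : Set G) + {y}) ∩ sumset (D + E) →
      y ∈ sumset E ∧ x ∈ sumset D + {y} := by
    rintro x ⟨⟨h, hh, z, hz, rfl⟩, B, hB, hsum⟩
    simp only [Set.mem_singleton_iff] at hz
    subst z
    beta_reduce
    beta_reduce at hsum
    obtain ⟨B1, B2, hB1, hB2, rfl⟩ := multiset_split B D E hB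
    have hs1 : B1.sum ∈ H := AddSubgroup.multiset_sum_mem H B1
      (fun a ha => hD a (Multiset.mem_of_le hB1 ha))
    have hs2 : B2.sum ∈ K := AddSubgroup.multiset_sum_mem K B2
      (fun a ha => hE a (Multiset.mem_of_le hB2 ha))
    rw [Multiset.sum_add] at hsum
    have hh' : h ∈ H := hh
    have hdiff : h - B1.sum ∈ H ⊓ K := by
      constructor
      · exact H.sub_mem hh' hs1
      · have heq : h - B1.sum = B2.sum - y := by
          rw [sub_eq_sub_iff_add_eq_add, ← hsum]; abel
        rw [heq]; exact K.sub_mem hs2 hy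
    rw [hinf, AddSubgroup.mem_bot, sub_eq_zero] at hdiff
    have hy2 : B2.sum = y := by
      have h2 : B1.sum + B2.sum = B1.sum + y := by rw [hsum, hdiff]
      exact add_left_cancel h2
    refine ⟨⟨B2, hB2, hy2⟩, B1.sum, ⟨B1, hB1, rfl⟩, y, rfl, ?_⟩
    show B1.sum + y = h + y
    rw [hdiff]
  constructor
  · intro hyE
    apply Set.Subset.antisymm
    · intro x hx; exact (key x hx).2
    · rintro x ⟨d, ⟨B, hB, rfl⟩, z, hz, rfl⟩
      simp only [Set.mem_singleton_iff] at hz; subst z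
      obtain ⟨C, hC, hCsum⟩ := hyE
      refine ⟨⟨B.sum, AddSubgroup.multiset_sum_mem H B
        (fun a ha => hD a (Multiset.mem_of_le hB ha)), y, rfl, rfl⟩,
        B + C, add_le_add hB hC, ?_⟩
      rw [Multiset.sum_add, hCsum]
  · intro hyE
    ext x
    simp only [Set.mem_empty_iff_false, iff_false]
    intro hx
    exact hyE (key x hx).1
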